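/- Let G be a d-regular graph on n vertices whose edges are each colored red or blue. Then the number of alternating paths of length 3 in G (paths on 4 distinct vertices, counted up to reversal, in which no two consecutive edges have the same color) is at most n·d³/8. -/

import Mathlib

open Filter

noncomputable section
open scoped Classical

/-- Neighbors of `b` whose edge to `b` has color `β`. -/
def nbh {n : ℕ} (G : SimpleGraph (Fin n)) (col : Sym2 (Fin n) → Bool)
    (b : Fin n) (β : Bool) : Finset (Fin n) :=
  (G.neighborFinset b).filter (fun x => col s(b, x) = β)

lemma bool_ne_iff' (a b : Bool) : a ≠ b ↔ a = !b := by revert a b; decide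

lemma nbh_card_add {n d : ℕ} (G : SimpleGraph (Fin n)) (hreg : G.IsRegularOfDegree d)
    (col : Sym2 (Fin n) → Bool) (b : Fin n) :
    (nbh G col b true).card + (nbh G col b false).card = d := by
  classical
  have h := Finset.card_filter_add_card_filter_not
    (s := G.neighborFinset b) (p := fun x => col s(b, x) = true)
  simp only [Bool.not_eq_true] at h
  rw [nbh, nbh, h]
  exact hreg b

/-- The predicate for an (unordered-endpoints) alternating path of length 3. -/
def Qpred {n : ℕ} (G : SimpleGraph (Fin n)) (col : Sym2 (Fin n) → Bool)
    (t : Fin n × Fin n × Fin n × Fin n) : Prop :=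
  G.Adj t.1 t.2.1 ∧ G.Adj t.2.1 t.2.2.1 ∧ G.Adj t.2.2.1 t.2.2.2 ∧
  t.1 ≠ t.2.2.1 ∧ t.1 ≠ t.2.2.2 ∧ t.2.1 ≠ t.2.2.2 ∧
  col s(t.1, t.2.1) ≠ col s(t.2.1, t.2.2.1) ∧
  col s(t.2.1, t.2.2.1) ≠ col s(t.2.2.1, t.2.2.2)

def rev {n : ℕ} (t : Fin n × Fin n × Fin n × Fin n) : Fin n × Fin n × Fin n × Fin n :=
  (t.2.2.2, t.2.2.1, t.2.1, t.1)

lemma Qpred_rev {n : ℕ} (G : SimpleGraph (Fin n)) (col : Sym2 (Fin n) → Bool)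
    (t : Fin n × Fin n × Fin n × Fin n) (h : Qpred G col t) : Qpred G col (rev t) := by
  obtain ⟨h1,h2,h3,h4,h5,h6,h7,h8⟩ := h
  simp only [rev, Qpred]
  refine ⟨h3.symm, h2.symm, h1.symm, h6.symm, h5.symm, h4.symm, ?_, ?_⟩
  · rw [Sym2.eq_swap (a := t.2.2.2), Sym2.eq_swap (a := t.2.2.1) (b := t.2.1)]
    exact h8.symm
  · rw [Sym2.eq_swap (a := t.2.2.1), Sym2.eq_swap (a := t.2.1) (b := t.1)]
    exact h7.symm

/-- a `d`-regular graph on `n` vertices with a red/blue edge-coloring has at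
most `n d³/8` alternating paths of length 3.  A path of length 3 is a sequence of 4 distinct
vertices with consecutive vertices adjacent, counted up to reversal (here each path is
counted once via its orientation with first vertex smaller than last), and it is alternating
when no two consecutive edges get the same color. -/
theorem count_alternating_paths_length_three (n d : ℕ)
    (G : SimpleGraph (Fin n)) (hreg : G.IsRegularOfDegree d)
    (col : Sym2 (Fin n) → Bool) :
    (((Finset.univ : Finset (Fin n × Fin n × Fin n × Fin n)).filter
        (fun t =>
          G.Adj t.1 t.2.1 ∧ G.Adj t.2.1 t.2.2.1 ∧ G.Adj t.2.2.1 t.2.2.2 ∧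
          t.1 ≠ t.2.2.1 ∧ t.1 ≠ t.2.2.2 ∧ t.2.1 ≠ t.2.2.2 ∧
          col s(t.1, t.2.1) ≠ col s(t.2.1, t.2.2.1) ∧
          col s(t.2.1, t.2.2.1) ≠ col s(t.2.2.1, t.2.2.2) ∧
          t.1 < t.2.2.2)).card : ℝ) ≤ (n : ℝ) * (d : ℝ) ^ 3 / 8 := by
  classical
  set S := ((Finset.univ : Finset (Fin n × Fin n × Fin n × Fin n)).filter
        (fun t => Qpred G col t ∧ t.1 < t.2.2.2)) with hS
  have hS0 : ((Finset.univ : Finset (Fin n × Fin n × Fin n × Fin n)).filter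
        (fun t =>
          G.Adj t.1 t.2.1 ∧ G.Adj t.2.1 t.2.2.1 ∧ G.Adj t.2.2.1 t.2.2.2 ∧
          t.1 ≠ t.2.2.1 ∧ t.1 ≠ t.2.2.2 ∧ t.2.1 ≠ t.2.2.2 ∧
          col s(t.1, t.2.1) ≠ col s(t.2.1, t.2.2.1) ∧
          col s(t.2.1, t.2.2.1) ≠ col s(t.2.2.1, t.2.2.2) ∧
          t.1 < t.2.2.2)) = S := by
    rw [hS]
    ext t
    simp only [Finset.mem_filter]
    simp only [Qpred]
    tauto
  rw [hS0]
  set T := ((Finset.univ : Finset (Fin n × Fin n × Fin n × Fin n)).filter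
        (Qpred G col)) with hT
  -- Step A : T.card = 2 * S.card
  have hTsplit : T.card = S.card + (T.filter (fun t => ¬ t.1 < t.2.2.2)).card := by
    rw [← Finset.card_filter_add_card_filter_not (s := T)
      (p := fun t => t.1 < t.2.2.2)]
    congr 1
    rw [hT, hS, Finset.filter_filter]
  have hrev : (T.filter (fun t => ¬ t.1 < t.2.2.2)).card = S.card := by
    refine Finset.card_bij' (i := fun t _ => rev t) (j := fun t _ => rev t) ?_ ?_ ?_ ?_
    · intro t ht
      simp only [Finset.mem_filter, Finset.mem_univ, true_and, hT, hS] at ht ⊢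
      obtain ⟨hq, h9⟩ := ht
      exact ⟨Qpred_rev G col t hq, (not_lt.1 h9).lt_of_ne (Ne.symm hq.2.2.2.2.1)⟩
    · intro t ht
      simp only [Finset.mem_filter, Finset.mem_univ, true_and, hT, hS] at ht ⊢
      obtain ⟨hq, h9⟩ := ht
      exact ⟨Qpred_rev G col t hq, not_lt.2 h9.le⟩
    · intro t _; rfl
    · intro t _; rfl
  have hA2 : T.card = 2 * S.card := by omega
  -- Step B : T.card ≤ U.card
  set U := ((Finset.univ : Finset (Fin n × Fin n × Fin n × Fin n)).filter
      (fun t => G.Adj t.1 t.2.1 ∧ G.Adj t.2.1 t.2.2.1 ∧ G.Adj t.2.2.1 t.2.2.2 ∧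
        col s(t.1, t.2.1) ≠ col s(t.2.1, t.2.2.1) ∧
        col s(t.2.1, t.2.2.1) ≠ col s(t.2.2.1, t.2.2.2))) with hU
  have hB : T.card ≤ U.card := by
    apply Finset.card_le_card
    intro t ht
    rw [hT, Finset.mem_filter] at ht
    rw [hU, Finset.mem_filter]
    have hq := ht.2
    simp only [Qpred] at hq
    obtain ⟨h1, h2, h3, _, _, _, h7, h8⟩ := hq
    exact ⟨ht.1, h1, h2, h3, h7, h8⟩
  set A := ((Finset.univ : Finset (Fin n × Fin n)).filter
      (fun p => G.Adj p.1 p.2)) with hA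
  -- Step C : U.card ≤ sum over adjacent ordered pairs
  have hC : U.card ≤ ∑ p ∈ A,
      (nbh G col p.1 (!col s(p.1, p.2))).card * (nbh G col p.2 (!col s(p.1, p.2))).card := by
    rw [Finset.card_eq_sum_card_fiberwise (f := fun t => (t.2.1, t.2.2.1)) (s := U) (t := A)
      (by intro t ht
          rw [hU, Finset.mem_coe, Finset.mem_filter] at ht
          simp only [hA, Finset.mem_coe, Finset.mem_filter, Finset.mem_univ, true_and]
          exact ht.2.2.1)]
    apply Finset.sum_le_sum
    intro p hp
    rw [← Finset.card_product]
    apply Finset.card_le_card_of_injOn (f := fun t => (t.1, t.2.2.2))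
    · intro t ht
      rw [Finset.mem_coe, Finset.mem_filter] at ht
      obtain ⟨htU, hfib⟩ := ht
      rw [hU, Finset.mem_filter] at htU
      obtain ⟨-, h1, h2, h3, h7, h8⟩ := htU
      have hb : t.2.1 = p.1 := congrArg Prod.fst hfib
      have hc : t.2.2.1 = p.2 := congrArg Prod.snd hfib
      rw [hb] at h1; rw [hc] at h3; rw [hb, hc] at h7 h8
      simp only [Finset.mem_coe, Finset.mem_product, nbh, Finset.mem_filter, SimpleGraph.mem_neighborFinset]
      refine ⟨⟨h1.symm, ?_⟩, ⟨h3, ?_⟩⟩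
      · rw [← bool_ne_iff', Sym2.eq_swap]
        exact h7
      · rw [← bool_ne_iff']
        exact h8.symm
    · intro t ht t' ht' heq
      simp only [Finset.mem_coe, Finset.mem_filter] at ht ht'
      have hb : t.2.1 = p.1 := congrArg Prod.fst ht.2
      have hc : t.2.2.1 = p.2 := congrArg Prod.snd ht.2
      have hb' : t'.2.1 = p.1 := congrArg Prod.fst ht'.2
      have hc' : t'.2.2.1 = p.2 := congrArg Prod.snd ht'.2
      have heq' : (t.1, t.2.2.2) = (t'.1, t'.2.2.2) := heq
      have e1 : t.1 = t'.1 := (Prod.ext_iff.1 heq').1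
      have e4 : t.2.2.2 = t'.2.2.2 := (Prod.ext_iff.1 heq').2
      exact Prod.ext_iff.2 ⟨e1, Prod.ext_iff.2 ⟨hb.trans hb'.symm,
        Prod.ext_iff.2 ⟨hc.trans hc'.symm, e4⟩⟩⟩
  -- real-valued estimates
  set g1 : Fin n × Fin n → ℝ := fun p => ((nbh G col p.1 (!col s(p.1, p.2))).card : ℝ) with hg1
  set g2 : Fin n × Fin n → ℝ := fun p => ((nbh G col p.2 (!col s(p.1, p.2))).card : ℝ) with hg2
  have hswap : ∑ p ∈ A, g2 p ^ 2 = ∑ p ∈ A, g1 p ^ 2 := by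
    apply Finset.sum_nbij' (i := Prod.swap) (j := Prod.swap)
    · intro p hp
      simp only [hA, Finset.mem_filter, Finset.mem_univ, true_and] at hp ⊢
      exact hp.symm
    · intro p hp
      simp only [hA, Finset.mem_filter, Finset.mem_univ, true_and] at hp ⊢
      exact hp.symm
    · intro p _; rfl
    · intro p _; rfl
    · intro p _
      simp only [hg1, hg2, Prod.snd_swap, Prod.fst_swap]
      rw [Sym2.eq_swap]
  have hE : (∑ p ∈ A, (nbh G col p.1 (!col s(p.1, p.2))).card *
        (nbh G col p.2 (!col s(p.1, p.2))).card : ℝ) ≤ ∑ p ∈ A, g1 p ^ 2 := by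
    have h1 : ∑ p ∈ A, g1 p * g2 p ≤ ∑ p ∈ A, (g1 p ^ 2 + g2 p ^ 2) / 2 := by
      apply Finset.sum_le_sum
      intro p _
      nlinarith [sq_nonneg (g1 p - g2 p)]
    calc (∑ p ∈ A, (nbh G col p.1 (!col s(p.1, p.2))).card *
          (nbh G col p.2 (!col s(p.1, p.2))).card : ℝ)
        = ∑ p ∈ A, g1 p * g2 p := by push_cast [hg1, hg2]; rfl
      _ ≤ ∑ p ∈ A, (g1 p ^ 2 + g2 p ^ 2) / 2 := h1
      _ = ((∑ p ∈ A, g1 p ^ 2) + ∑ p ∈ A, g2 p ^ 2) / 2 := by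
          rw [← Finset.sum_add_distrib, Finset.sum_div]
      _ = ∑ p ∈ A, g1 p ^ 2 := by rw [hswap]; ring
  have hG : ∑ p ∈ A, g1 p ^ 2 = ∑ b : Fin n, ∑ c ∈ G.neighborFinset b,
      ((nbh G col b (!col s(b, c))).card : ℝ) ^ 2 := by
    rw [hA, Finset.sum_filter, Fintype.sum_prod_type]
    refine Finset.sum_congr rfl (fun b _ => ?_)
    rw [SimpleGraph.neighborFinset_eq_filter, Finset.sum_filter]
  have hH : ∀ b : Fin n, ∑ c ∈ G.neighborFinset b,
      ((nbh G col b (!col s(b, c))).card : ℝ) ^ 2 ≤ (d : ℝ) ^ 3 / 4 := by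
    intro b
    have hsplit := Finset.sum_filter_add_sum_filter_not (G.neighborFinset b)
      (fun c => col s(b, c) = true)
      (fun c => ((nbh G col b (!col s(b, c))).card : ℝ) ^ 2)
    rw [← hsplit]
    have h1 : ∑ c ∈ (G.neighborFinset b).filter (fun c => col s(b, c) = true),
        ((nbh G col b (!col s(b, c))).card : ℝ) ^ 2
        = (nbh G col b true).card * ((nbh G col b false).card : ℝ) ^ 2 := by
      rw [show ((G.neighborFinset b).filter (fun c => col s(b, c) = true)) = nbh G col b true
        from rfl]
      rw [Finset.sum_congr rfl (fun c hc => by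
        simp only [nbh, Finset.mem_filter] at hc
        rw [hc.2]), Finset.sum_const, nsmul_eq_mul]
      norm_num
    have h2 : ∑ c ∈ (G.neighborFinset b).filter (fun c => ¬ col s(b, c) = true),
        ((nbh G col b (!col s(b, c))).card : ℝ) ^ 2
        = (nbh G col b false).card * ((nbh G col b true).card : ℝ) ^ 2 := by
      rw [show ((G.neighborFinset b).filter (fun c => ¬ col s(b, c) = true)) = nbh G col b false
        from by simp only [nbh, Bool.not_eq_true]]
      rw [Finset.sum_congr rfl (fun c hc => by
        simp only [nbh, Finset.mem_filter] at hc
        rw [hc.2]), Finset.sum_const, nsmul_eq_mul]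
      norm_num
    rw [h1, h2]
    have hrs := nbh_card_add G hreg col b
    have hrs' : ((nbh G col b true).card : ℝ) + ((nbh G col b false).card : ℝ) = d := by
      exact_mod_cast hrs
    set r := ((nbh G col b true).card : ℝ)
    set s := ((nbh G col b false).card : ℝ)
    have hr : 0 ≤ r := Nat.cast_nonneg _
    have hs : 0 ≤ s := Nat.cast_nonneg _
    rw [← hrs']
    nlinarith [mul_nonneg (add_nonneg hr hs) (sq_nonneg (r - s))]
  have hFinal : (U.card : ℝ) ≤ (n : ℝ) * (d : ℝ) ^ 3 / 4 := by
    calc (U.card : ℝ) ≤ (∑ p ∈ A, (nbh G col p.1 (!col s(p.1, p.2))).card *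
          (nbh G col p.2 (!col s(p.1, p.2))).card : ℝ) := by exact_mod_cast hC
      _ ≤ ∑ p ∈ A, g1 p ^ 2 := hE
      _ = ∑ b : Fin n, ∑ c ∈ G.neighborFinset b,
          ((nbh G col b (!col s(b, c))).card : ℝ) ^ 2 := hG
      _ ≤ ∑ _b : Fin n, (d : ℝ) ^ 3 / 4 := Finset.sum_le_sum (fun b _ => hH b)
      _ = (n : ℝ) * (d : ℝ) ^ 3 / 4 := by
          rw [Finset.sum_const, Finset.card_univ, Fintype.card_fin, nsmul_eq_mul]; ring
  have hTU : (T.card : ℝ) ≤ (n : ℝ) * (d : ℝ) ^ 3 / 4 :=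
    le_trans (by exact_mod_cast hB) hFinal
  have h2 : (T.card : ℝ) = 2 * (S.card : ℝ) := by exact_mod_cast hA2
  linarith
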